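/- arXiv:1303.2162 — 2 statements merged into one kernel-verified Lean document; each statement's English description precedes it below -/
import Mathlib

section
/- Let R = [a,b] x [c,d] be a nondegenerate axis-parallel rectangle and let T be a finite family of axis-parallel segments in the plane. Suppose every point of R is orthogonally visible (within R) to some segment of T, where a point p is visible to segment t if some q in t has pq perpendicular to t and pq contained in R. Then either the vertical segments of T alone collectively see all of R, or the horizontal segments of T alone collectively see all of R. -/
/-- A point `p` is orthogonally visible (within the region `R`) to the
axis-parallel segment with endpoints `t.1`, `t.2`.  A vertical segment
(equal `x`-coordinates of its endpoints) sees points via horizontal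
normals, a horizontal segment via vertical normals. -/
def seesIn (R : Set (ℝ × ℝ)) (t : (ℝ × ℝ) × (ℝ × ℝ)) (p : ℝ × ℝ) : Prop :=
  if t.1.1 = t.2.1 then
    ∃ q ∈ segment ℝ t.1 t.2, q.2 = p.2 ∧ segment ℝ p q ⊆ R
  else
    ∃ q ∈ segment ℝ t.1 t.2, q.1 = p.1 ∧ segment ℝ p q ⊆ R

theorem stmt2 (a b c d : ℝ) (hab : a < b) (hcd : c < d)
    (R : Set (ℝ × ℝ)) (hR : R = Set.Icc a b ×ˢ Set.Icc c d)
    (T : Finset ((ℝ × ℝ) × (ℝ × ℝ)))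
    (haxis : ∀ t ∈ T, t.1.1 = t.2.1 ∨ t.1.2 = t.2.2)
    (hcov : ∀ p ∈ R, ∃ t ∈ T, seesIn R t p) :
    (∀ p ∈ R, ∃ t ∈ T, t.1.1 = t.2.1 ∧ seesIn R t p) ∨
    (∀ p ∈ R, ∃ t ∈ T, t.1.2 = t.2.2 ∧ seesIn R t p) := by
  have hconv : Convex ℝ R := by
    rw [hR]; exact (convex_Icc a b).prod (convex_Icc c d)
  by_contra h
  push_neg at h
  obtain ⟨⟨p, hp, hpv⟩, ⟨p', hp', hph⟩⟩ := h
  set r : ℝ × ℝ := (p'.1, p.2) with hr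
  have hrR : r ∈ R := by
    rw [hR] at hp hp' ⊢
    exact ⟨hp'.1, hp.2⟩
  obtain ⟨t, ht, hsee⟩ := hcov r hrR
  by_cases hv : t.1.1 = t.2.1
  · apply hpv t ht hv
    unfold seesIn at hsee ⊢
    rw [if_pos hv] at hsee ⊢
    obtain ⟨q, hq, hq2, hseg⟩ := hsee
    have hqR : q ∈ R := hseg (right_mem_segment ℝ r q)
    exact ⟨q, hq, hq2, hconv.segment_subset hp hqR⟩
  · apply hph t ht ((haxis t ht).resolve_left hv)
    unfold seesIn at hsee ⊢
    rw [if_neg hv] at hsee ⊢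
    obtain ⟨q, hq, hq1, hseg⟩ := hsee
    have hqR : q ∈ R := hseg (right_mem_segment ℝ r q)
    exact ⟨q, hq, hq1, hconv.segment_subset hp' hqR⟩
end

section
/- Let G = (A ∪ B, E) be a finite bipartite graph with positive vertex weights. Then the minimum weight of a vertex cover of G equals the maximum value of a fractional matching, and in particular, by LP duality and integrality of the bipartite vertex cover polytope, a minimum-weight vertex cover can be found among integral solutions of the LP relaxation. -/
open Finset

set_option linter.unusedSectionVars false
set_option maxHeartbeats 1000000

namespace Stmt13Aux

variable {V : Type*} [Fintype V] [DecidableEq V] (G : SimpleGraph V) [DecidableRel G.Adj]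

def wdeg (y : Sym2 V → ℝ) (v : V) : ℝ := ∑ e ∈ G.incidenceFinset v, y e

lemma wdeg_eq (y : Sym2 V → ℝ) (v : V) :
    wdeg G y v = ∑ e ∈ G.edgeFinset, if v ∈ e then y e else 0 := by
  rw [wdeg, SimpleGraph.incidenceFinset_eq_filter, sum_filter]

lemma sum_wdeg (y : Sym2 V → ℝ) (S : Finset V) :
    ∑ v ∈ S, wdeg G y v = ∑ e ∈ G.edgeFinset, ((S.filter (· ∈ e)).card : ℝ) * y e := by
  simp_rw [wdeg_eq]
  rw [Finset.sum_comm]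
  refine Finset.sum_congr rfl fun e _ => ?_
  rw [← Finset.sum_filter, Finset.sum_const, nsmul_eq_mul]

def upd (y : Sym2 V → ℝ) (e₀ : Sym2 V) (c : ℝ) : Sym2 V → ℝ :=
  fun f => if f = e₀ then y f + c else y f

lemma upd_apply (y : Sym2 V → ℝ) (e₀ : Sym2 V) (c : ℝ) (f : Sym2 V) :
    upd y e₀ c f = y f + if f = e₀ then c else 0 := by
  unfold upd; split <;> simp

lemma wdeg_upd (y : Sym2 V → ℝ) {e₀ : Sym2 V} (he : e₀ ∈ G.edgeFinset) (c : ℝ) (v : V) :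
    wdeg G (upd y e₀ c) v = wdeg G y v + if v ∈ e₀ then c else 0 := by
  unfold wdeg
  simp_rw [upd_apply, Finset.sum_add_distrib]
  congr 1
  rw [Finset.sum_ite_eq' (G.incidenceFinset v) e₀ (fun _ => c)]
  congr 1
  simp only [SimpleGraph.mem_incidenceFinset, eq_iff_iff]
  constructor
  · exact fun h => h.2
  · exact fun h => ⟨(SimpleGraph.mem_edgeFinset.mp he), h⟩

lemma sum_upd (y : Sym2 V → ℝ) {e₀ : Sym2 V} (he : e₀ ∈ G.edgeFinset) (c : ℝ) :
    ∑ f ∈ G.edgeFinset, upd y e₀ c f = (∑ f ∈ G.edgeFinset, y f) + c := by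
  simp_rw [upd_apply, Finset.sum_add_distrib]
  congr 1
  rw [Finset.sum_ite_eq' G.edgeFinset e₀ (fun _ => c), if_pos he]

inductive Reach (A : Set V) (w : V → ℝ) (y : Sym2 V → ℝ) : V → Prop
  | base (a : V) (ha : a ∈ A) (hs : wdeg G y a < w a) : Reach A w y a
  | fwd (a b : V) (ha : a ∈ A) (hr : Reach A w y a) (hadj : G.Adj a b) : Reach A w y b
  | bwd (a b : V) (ha : a ∈ A) (hr : Reach A w y b) (hb : b ∉ A) (hadj : G.Adj a b)
      (hy : 0 < y s(a, b)) : Reach A w y a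

def QA (A : Set V) (w : V → ℝ) (y : Sym2 V → ℝ) (v : V) : Prop :=
  ∃ C : ℝ, 0 ≤ C ∧ ∀ δ : ℝ, 0 < δ → ∃ δ' : ℝ, ∃ y' : Sym2 V → ℝ,
    0 < δ' ∧ δ' ≤ δ ∧
    (∀ e, 0 ≤ y' e) ∧ (∀ e, e ∉ G.edgeSet → y' e = 0) ∧
    (∀ e, y e - C * δ' ≤ y' e) ∧
    (∀ u, wdeg G y' u ≤ w u) ∧
    wdeg G y' v + δ' ≤ w v ∧
    (∀ u, u ∉ A → wdeg G y' u = wdeg G y u) ∧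
    (∑ e ∈ G.edgeFinset, y' e) = ∑ e ∈ G.edgeFinset, y e

def QB (A : Set V) (w : V → ℝ) (y : Sym2 V → ℝ) (v : V) : Prop :=
  ∃ C : ℝ, 0 ≤ C ∧ ∀ δ : ℝ, 0 < δ → ∃ δ' : ℝ, ∃ y' : Sym2 V → ℝ,
    0 < δ' ∧ δ' ≤ δ ∧
    (∀ e, 0 ≤ y' e) ∧ (∀ e, e ∉ G.edgeSet → y' e = 0) ∧
    (∀ e, y e - C * δ' ≤ y' e) ∧
    (∀ u, u ∈ A → wdeg G y' u ≤ w u) ∧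
    (∀ u, u ∉ A → u ≠ v → wdeg G y' u = wdeg G y u) ∧
    wdeg G y' v = wdeg G y v + δ' ∧
    (∑ e ∈ G.edgeFinset, y' e) = (∑ e ∈ G.edgeFinset, y e) + δ'

lemma reach_q {A : Set V} (hbip : ∀ u v, G.Adj u v → (u ∈ A ↔ v ∉ A))
    {w : V → ℝ} {y : Sym2 V → ℝ}
    (hnn : ∀ e, 0 ≤ y e) (hsupp : ∀ e, e ∉ G.edgeSet → y e = 0)
    (hfeas : ∀ u, wdeg G y u ≤ w u)
    {v : V} (hv : Reach G A w y v) :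
    (v ∈ A → QA G A w y v) ∧ (v ∉ A → QB G A w y v) := by
  induction hv with
  | base a ha hs =>
    refine ⟨fun _ => ⟨0, le_refl 0, fun δ hδ => ?_⟩, fun h => absurd ha h⟩
    refine ⟨min δ (w a - wdeg G y a), y, lt_min hδ (by linarith), min_le_left _ _,
      hnn, hsupp, fun e => by simpa using hnn e, hfeas, ?_, fun _ _ => rfl, rfl⟩
    have := min_le_right δ (w a - wdeg G y a); linarith
  | fwd a b ha hr hadj ih =>
    have hbA : b ∉ A := (hbip a b hadj).mp ha
    have he : s(a, b) ∈ G.edgeFinset := SimpleGraph.mem_edgeFinset.mpr ((SimpleGraph.mem_edgeSet G).mpr hadj)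
    refine ⟨fun h => absurd h hbA, fun _ => ?_⟩
    obtain ⟨C, hC0, hC⟩ := ih.1 ha
    refine ⟨C + 1, by linarith, fun δ hδ => ?_⟩
    obtain ⟨δ', y', h1, h2, h3, h4, h5, h6, h7, h8, h9⟩ := hC δ hδ
    refine ⟨δ', upd y' s(a, b) δ', h1, h2, ?_, ?_, ?_, ?_, ?_, ?_, ?_⟩
    · intro e; rw [upd_apply]
      have := h3 e; split <;> [linarith; linarith]
    · intro e heS
      have hne : e ≠ s(a, b) := fun h => heS (h ▸ SimpleGraph.mem_edgeFinset.mp he)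
      rw [upd_apply, if_neg hne, h4 e heS, add_zero]
    · intro e; rw [upd_apply]
      have := h5 e; split <;> nlinarith
    · -- A side stays feasible
      intro u hu
      rw [wdeg_upd G y' he]
      by_cases hmem : u ∈ s(a, b)
      · rw [if_pos hmem]
        rcases Sym2.mem_iff.mp hmem with h | h
        · subst h; exact h7
        · subst h; exact absurd hu hbA
      · rw [if_neg hmem, add_zero]; exact h6 u
    · -- B side other than b unchanged
      intro u huA hub
      rw [wdeg_upd G y' he]
      have hmem : u ∉ s(a, b) := by
        rw [Sym2.mem_iff]
        rintro (rfl | rfl)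
        · exact huA ha
        · exact hub rfl
      rw [if_neg hmem, add_zero]; exact h8 u huA
    · -- degree at b goes up by δ'
      rw [wdeg_upd G y' he, if_pos (Sym2.mem_iff.mpr (Or.inr rfl)), h8 b hbA]
    · rw [sum_upd G y' he, h9]
  | bwd a b ha hr hbB hadj hy ih =>
    have he : s(a, b) ∈ G.edgeFinset := SimpleGraph.mem_edgeFinset.mpr ((SimpleGraph.mem_edgeSet G).mpr hadj)
    refine ⟨fun _ => ?_, fun h => absurd ha h⟩
    obtain ⟨C, hC0, hC⟩ := ih.2 hbB
    refine ⟨C + 1, by linarith, fun δ hδ => ?_⟩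
    have hC1 : (0:ℝ) < C + 1 := by linarith
    have hδt : 0 < min δ (y s(a, b) / (C + 1)) := lt_min hδ (div_pos hy hC1)
    obtain ⟨δ', y', h1, h2, h3, h4, h5, h6, h7, h8, h9⟩ := hC _ hδt
    have hδ'2 : δ' ≤ y s(a, b) / (C + 1) := h2.trans (min_le_right _ _)
    have hkey : (C + 1) * δ' ≤ y s(a, b) := by
      rw [← le_div_iff₀' hC1]; exact hδ'2
    have hye : δ' ≤ y' s(a, b) := by
      have := h5 s(a, b); nlinarith
    refine ⟨δ', upd y' s(a, b) (-δ'), h1, h2.trans (min_le_left _ _), ?_, ?_, ?_, ?_, ?_, ?_, ?_⟩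
    · intro e
      rw [upd_apply]
      by_cases hee : e = s(a, b)
      · subst hee; rw [if_pos rfl]; linarith
      · rw [if_neg hee, add_zero]; exact h3 e
    · intro e heS
      have hne : e ≠ s(a, b) := fun h => heS (h ▸ SimpleGraph.mem_edgeFinset.mp he)
      rw [upd_apply, if_neg hne, h4 e heS, add_zero]
    · intro e
      rw [upd_apply]
      have := h5 e; split <;> nlinarith
    · -- every vertex feasible
      intro u
      rw [wdeg_upd G y' he]
      by_cases hmem : u ∈ s(a, b)
      · rw [if_pos hmem]
        rcases Sym2.mem_iff.mp hmem with h | h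
        · subst h; have := h6 u ha; linarith
        · subst h; rw [h8]; have := hfeas u; linarith
      · rw [if_neg hmem, add_zero]
        by_cases huA : u ∈ A
        · exact h6 u huA
        · have hub : u ≠ b := fun h => hmem (h ▸ Sym2.mem_iff.mpr (Or.inr rfl))
          rw [h7 u huA hub]; exact hfeas u
    · -- slack δ' at a
      rw [wdeg_upd G y' he, if_pos (Sym2.mem_iff.mpr (Or.inl rfl))]
      have := h6 a ha; linarith
    · -- B degrees unchanged
      intro u huA
      rw [wdeg_upd G y' he]
      by_cases hub : u = b
      · subst hub
        rw [if_pos (Sym2.mem_iff.mpr (Or.inr rfl)), h8]; ring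
      · have hmem : u ∉ s(a, b) := by
          rw [Sym2.mem_iff]
          rintro (rfl | rfl)
          · exact huA ha
          · exact hub rfl
        rw [if_neg hmem, add_zero]; exact h7 u huA hub
    · rw [sum_upd G y' he, h9]; ring

/-- weak duality -/
lemma weak_duality {w : V → ℝ} {S : Finset V}
    (hcov : ∀ u v, G.Adj u v → u ∈ S ∨ v ∈ S) {z : Sym2 V → ℝ}
    (hnn : ∀ e, 0 ≤ z e) (hfeas : ∀ u, wdeg G z u ≤ w u) :
    ∑ e ∈ G.edgeFinset, z e ≤ ∑ v ∈ S, w v := by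
  have h1 : ∑ e ∈ G.edgeFinset, z e
      ≤ ∑ e ∈ G.edgeFinset, ((S.filter (· ∈ e)).card : ℝ) * z e := by
    refine Finset.sum_le_sum fun e he => ?_
    induction e with
    | _ a b =>
      have hadj : G.Adj a b := (SimpleGraph.mem_edgeSet G).mp (SimpleGraph.mem_edgeFinset.mp he)
      have hone : 1 ≤ (S.filter (· ∈ s(a, b))).card := by
        refine Finset.card_pos.mpr ?_
        rcases hcov a b hadj with h | h
        · exact ⟨a, Finset.mem_filter.mpr ⟨h, Sym2.mem_iff.mpr (Or.inl rfl)⟩⟩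
        · exact ⟨b, Finset.mem_filter.mpr ⟨h, Sym2.mem_iff.mpr (Or.inr rfl)⟩⟩
      have : (1 : ℝ) ≤ ((S.filter (· ∈ s(a, b))).card : ℝ) := by exact_mod_cast hone
      exact le_mul_of_one_le_left (hnn _) this
  calc ∑ e ∈ G.edgeFinset, z e ≤ _ := h1
    _ = ∑ v ∈ S, wdeg G z v := (sum_wdeg G z S).symm
    _ ≤ ∑ v ∈ S, w v := Finset.sum_le_sum fun v _ => hfeas v


/-- from a maximal fractional matching, build a vertex cover of the same weight -/
lemma exists_cover {A : Set V} (hbip : ∀ u v, G.Adj u v → (u ∈ A ↔ v ∉ A))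
    {w : V → ℝ} {y : Sym2 V → ℝ}
    (hnn : ∀ e, 0 ≤ y e) (hsupp : ∀ e, e ∉ G.edgeSet → y e = 0)
    (hfeas : ∀ u, wdeg G y u ≤ w u)
    (hmax : ∀ z : Sym2 V → ℝ, (∀ e, 0 ≤ z e) → (∀ e, e ∉ G.edgeSet → z e = 0) →
      (∀ u, wdeg G z u ≤ w u) → ∑ e ∈ G.edgeFinset, z e ≤ ∑ e ∈ G.edgeFinset, y e) :
    ∃ S : Finset V, (∀ u v, G.Adj u v → u ∈ S ∨ v ∈ S) ∧
      ∑ v ∈ S, w v = ∑ e ∈ G.edgeFinset, y e := by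
  classical
  set S : Finset V := univ.filter
    (fun v => (v ∈ A ∧ ¬ Reach G A w y v) ∨ (v ∉ A ∧ Reach G A w y v)) with hS
  -- tightness of reachable B-vertices
  have tightB : ∀ b, b ∉ A → Reach G A w y b → wdeg G y b = w b := by
    intro b hbA hrb
    by_contra hne
    have hlt : wdeg G y b < w b := lt_of_le_of_ne (hfeas b) hne
    obtain ⟨C, hC0, hC⟩ := (reach_q G hbip hnn hsupp hfeas hrb).2 hbA
    obtain ⟨δ', y', h1, h2, h3, h4, h5, h6, h7, h8, h9⟩ := hC (w b - wdeg G y b) (by linarith)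
    have hfeas' : ∀ u, wdeg G y' u ≤ w u := by
      intro u
      by_cases huA : u ∈ A
      · exact h6 u huA
      · by_cases hub : u = b
        · subst hub; rw [h8]; linarith
        · rw [h7 u huA hub]; exact hfeas u
    have := hmax y' h3 h4 hfeas'
    linarith
  -- tightness of unreachable A-vertices
  have tightA : ∀ a, a ∈ A → ¬ Reach G A w y a → wdeg G y a = w a := by
    intro a ha hra
    refine le_antisymm (hfeas a) ?_
    by_contra hlt
    exact hra (Reach.base a ha (lt_of_not_ge hlt))
  -- S is a vertex cover
  have hcov : ∀ u v, G.Adj u v → u ∈ S ∨ v ∈ S := by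
    have key : ∀ u v, G.Adj u v → u ∈ A → u ∈ S ∨ v ∈ S := by
      intro u v hadj hu
      have hvA : v ∉ A := (hbip u v hadj).mp hu
      by_cases hr : Reach G A w y u
      · exact Or.inr (Finset.mem_filter.mpr ⟨Finset.mem_univ _,
          Or.inr ⟨hvA, Reach.fwd u v hu hr hadj⟩⟩)
      · exact Or.inl (Finset.mem_filter.mpr ⟨Finset.mem_univ _, Or.inl ⟨hu, hr⟩⟩)
    intro u v hadj
    by_cases hu : u ∈ A
    · exact key u v hadj hu
    · have hvA : v ∈ A := by
        by_contra hv
        exact hu ((hbip v u hadj.symm).mpr hu |> fun h => absurd ((hbip u v hadj).mpr hv) hu)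
      exact (key v u hadj.symm hvA).symm
  -- per-edge count is 1 on the support of y
  have hcount : ∀ e ∈ G.edgeFinset, ((S.filter (· ∈ e)).card : ℝ) * y e = y e := by
    have key : ∀ a b : V, G.Adj a b → a ∈ A →
        ((S.filter (· ∈ s(a, b))).card : ℝ) * y s(a, b) = y s(a, b) := by
      intro a b hadj ha
      have hbA : b ∉ A := (hbip a b hadj).mp ha
      by_cases hy0 : y s(a, b) = 0
      · rw [hy0, mul_zero]
      have hypos : 0 < y s(a, b) := lt_of_le_of_ne (hnn _) (Ne.symm hy0)
      have hone : (S.filter (· ∈ s(a, b))) = {a} ∨ (S.filter (· ∈ s(a, b))) = {b} := by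
        by_cases hr : Reach G A w y a
        · right
          have hrb : Reach G A w y b := Reach.fwd a b ha hr hadj
          ext v
          simp only [Finset.mem_filter, Finset.mem_singleton, hS, Finset.mem_univ, true_and,
            Sym2.mem_iff]
          constructor
          · rintro ⟨hv, rfl | rfl⟩
            · rcases hv with ⟨_, hna⟩ | ⟨hna, _⟩
              · exact absurd hr hna
              · exact absurd ha hna
            · rfl
          · rintro rfl; exact ⟨Or.inr ⟨hbA, hrb⟩, Or.inr rfl⟩
        · left
          have hrb : ¬ Reach G A w y b := fun h => hr (Reach.bwd a b ha h hbA hadj hypos)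
          ext v
          simp only [Finset.mem_filter, Finset.mem_singleton, hS, Finset.mem_univ, true_and,
            Sym2.mem_iff]
          constructor
          · rintro ⟨hv, rfl | rfl⟩
            · rfl
            · rcases hv with ⟨hna, _⟩ | ⟨_, hna⟩
              · exact absurd hna hbA
              · exact absurd hna hrb
          · rintro rfl; exact ⟨Or.inl ⟨ha, hr⟩, Or.inl rfl⟩
      rcases hone with h | h <;> rw [h] <;> simp
    intro e he
    induction e with
    | _ a b =>
      have hadj : G.Adj a b := (SimpleGraph.mem_edgeSet G).mp (SimpleGraph.mem_edgeFinset.mp he)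
      by_cases ha : a ∈ A
      · exact key a b hadj ha
      · have hbA : b ∈ A := by
          by_contra hb
          exact ha ((hbip a b hadj).mpr hb)
        rw [Sym2.eq_swap]
        exact key b a hadj.symm hbA
  -- weight of the cover equals the matching value
  refine ⟨S, hcov, ?_⟩
  have htight : ∀ v ∈ S, w v = wdeg G y v := by
    intro v hv
    rcases (Finset.mem_filter.mp hv).2 with ⟨hva, hvr⟩ | ⟨hva, hvr⟩
    · exact (tightA v hva hvr).symm
    · exact (tightB v hva hvr).symm
  calc ∑ v ∈ S, w v = ∑ v ∈ S, wdeg G y v := Finset.sum_congr rfl htight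
    _ = ∑ e ∈ G.edgeFinset, ((S.filter (· ∈ e)).card : ℝ) * y e := sum_wdeg G y S
    _ = ∑ e ∈ G.edgeFinset, y e := Finset.sum_congr rfl hcount


/-- existence of a maximal fractional matching -/
lemma exists_max (w : V → ℝ) (hw : ∀ v, 0 < w v) :
    ∃ y : Sym2 V → ℝ, ((∀ e, 0 ≤ y e) ∧ (∀ e, e ∉ G.edgeSet → y e = 0) ∧
      (∀ u, wdeg G y u ≤ w u)) ∧
      ∀ z : Sym2 V → ℝ, (∀ e, 0 ≤ z e) → (∀ e, e ∉ G.edgeSet → z e = 0) →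
        (∀ u, wdeg G z u ≤ w u) → ∑ e ∈ G.edgeFinset, z e ≤ ∑ e ∈ G.edgeFinset, y e := by
  classical
  set M : ℝ := ∑ v, w v with hM
  have hM0 : 0 ≤ M := Finset.sum_nonneg fun v _ => (hw v).le
  have hwM : ∀ v : V, w v ≤ M := fun v =>
    Finset.single_le_sum (fun u _ => (hw u).le) (Finset.mem_univ v)
  set F : Set (Sym2 V → ℝ) := {y | (∀ e, 0 ≤ y e) ∧ (∀ e, e ∉ G.edgeSet → y e = 0) ∧
    (∀ u, wdeg G y u ≤ w u)} with hF
  have h0 : (fun _ => (0 : ℝ)) ∈ F := by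
    refine ⟨fun e => le_refl 0, fun e _ => rfl, fun u => ?_⟩
    simp [wdeg]
    exact (hw u).le
  have hcl : IsClosed F := by
    rw [hF, Set.setOf_and, Set.setOf_and]
    refine IsClosed.inter ?_ (IsClosed.inter ?_ ?_)
    · rw [Set.setOf_forall]
      exact isClosed_iInter fun e => isClosed_le continuous_const (continuous_apply e)
    · rw [Set.setOf_forall]
      refine isClosed_iInter fun e => ?_
      by_cases he : e ∈ G.edgeSet
      · simp only [he, not_true_eq_false, false_implies, Set.setOf_true]
        exact isClosed_univ
      · simp only [he, not_false_eq_true, true_implies]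
        exact isClosed_eq (continuous_apply e) continuous_const
    · rw [Set.setOf_forall]
      refine isClosed_iInter fun u => ?_
      exact isClosed_le (continuous_finset_sum _ fun e _ => continuous_apply e) continuous_const
  have hsub : F ⊆ Set.Icc (fun _ => (0 : ℝ)) (fun _ => M) := by
    rintro y ⟨h1, h2, h3⟩
    constructor
    · intro e; exact h1 e
    · intro e
      show y e ≤ M
      induction e with
      | _ a b =>
        by_cases he : s(a, b) ∈ G.edgeSet
        · have hmem : s(a, b) ∈ G.incidenceFinset a := by
            rw [SimpleGraph.incidenceFinset_eq_filter, Finset.mem_filter]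
            exact ⟨SimpleGraph.mem_edgeFinset.mpr he, Sym2.mem_iff.mpr (Or.inl rfl)⟩
          have : y s(a, b) ≤ wdeg G y a :=
            Finset.single_le_sum (fun e _ => h1 e) hmem
          exact this.trans ((h3 a).trans (hwM a))
        · rw [h2 _ he]; exact hM0
  have hcpt : IsCompact F := IsCompact.of_isClosed_subset isCompact_Icc hcl hsub
  have hcont : Continuous (fun y : Sym2 V → ℝ => ∑ e ∈ G.edgeFinset, y e) :=
    continuous_finset_sum _ fun e _ => continuous_apply e
  obtain ⟨y, hyF, hy⟩ := hcpt.exists_isMaxOn ⟨_, h0⟩ hcont.continuousOn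
  exact ⟨y, hyF, fun z hz1 hz2 hz3 => hy ⟨hz1, hz2, hz3⟩⟩

end Stmt13Aux

theorem stmt13 {V : Type*} [Fintype V] [DecidableEq V]
    (G : SimpleGraph V) [DecidableRel G.Adj]
    (A : Set V) (hbip : ∀ u v, G.Adj u v → (u ∈ A ↔ v ∉ A))
    (w : V → ℝ) (hw : ∀ v, 0 < w v) :
    sInf {c : ℝ | ∃ S : Finset V,
        (∀ u v, G.Adj u v → u ∈ S ∨ v ∈ S) ∧ c = ∑ v ∈ S, w v}
      =
    sSup {c : ℝ | ∃ y : Sym2 V → ℝ, (∀ e, 0 ≤ y e) ∧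
        (∀ e, e ∉ G.edgeSet → y e = 0) ∧
        (∀ v, ∑ e ∈ G.incidenceFinset v, y e ≤ w v) ∧
        c = ∑ e ∈ G.edgeFinset, y e} := by
  classical
  obtain ⟨y, ⟨hnn, hsupp, hfeas⟩, hmax⟩ := Stmt13Aux.exists_max G w hw
  obtain ⟨S, hcov, hSval⟩ := Stmt13Aux.exists_cover G hbip hnn hsupp hfeas hmax
  set L : Set ℝ := {c : ℝ | ∃ S : Finset V,
      (∀ u v, G.Adj u v → u ∈ S ∨ v ∈ S) ∧ c = ∑ v ∈ S, w v} with hL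
  set Rs : Set ℝ := {c : ℝ | ∃ y : Sym2 V → ℝ, (∀ e, 0 ≤ y e) ∧
      (∀ e, e ∉ G.edgeSet → y e = 0) ∧
      (∀ v, ∑ e ∈ G.incidenceFinset v, y e ≤ w v) ∧
      c = ∑ e ∈ G.edgeFinset, y e} with hRs
  have hsup : sSup Rs = ∑ e ∈ G.edgeFinset, y e := by
    refine IsGreatest.csSup_eq ⟨⟨y, hnn, hsupp, hfeas, rfl⟩, ?_⟩
    rintro m ⟨z, hz1, hz2, hz3, rfl⟩
    exact hmax z hz1 hz2 hz3
  have hLfin : L.Finite := by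
    refine (Set.finite_range (fun T : Finset V => ∑ v ∈ T, w v)).subset ?_
    rintro c ⟨T, _, rfl⟩
    exact ⟨T, rfl⟩
  have hLmem : (∑ v ∈ S, w v) ∈ L := ⟨S, hcov, rfl⟩
  refine le_antisymm ?_ ?_
  · rw [hsup, ← hSval]
    exact csInf_le hLfin.bddBelow hLmem
  · refine le_csInf ⟨_, hLmem⟩ ?_
    rintro b ⟨T, hTcov, rfl⟩
    rw [hsup]
    exact Stmt13Aux.weak_duality G hTcov hnn hfeas
end
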